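/- (KL decomposition for tree-structured projections, underlying the Chow–Liu algorithm.) Let d ≥ 2, let X_1, …, X_d be finite nonempty alphabets, and let P be a pmf on X_1 × ⋯ × X_d with P(x) > 0 for all x. Let T be a rooted spanning tree on {1,…,d} with root r and parent map π (so π(i) is the parent of each i ≠ r). Define the tree projection Q_T(x) = P_{X_r}(x_r) · Π_{i ≠ r} P_{X_i | X_{π(i)}}(x_i | x_{π(i)}), where P_{X_i}, P_{X_i,X_j} denote the marginals of P and P_{X_i|X_j}(a|b) = P_{X_i,X_j}(a,b)/P_{X_j}(b). Then Q_T is a pmf on X_1 × ⋯ × X_d and D(P ‖ Q_T) = Σ_{i=1}^d H(P_{X_i}) − H(P) − Σ_{i ≠ r} I(P_{X_i, X_{π(i)}}). -/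

import Mathlib

set_option linter.unusedSectionVars false

/-- Shannon entropy of a pmf `P` on a finite alphabet, with natural logarithm and the
convention `0 ln 0 = 0`. -/
noncomputable def entropy {A : Type*} [Fintype A] (P : A → ℝ) : ℝ :=
  ∑ a, -(P a * Real.log (P a))

/-- Mutual information of a joint pmf `P` on `A × B`: `I(P) = H(P1) + H(P2) − H(P)`. -/
noncomputable def mutualInfo {A B : Type*} [Fintype A] [Fintype B] (P : A × B → ℝ) : ℝ :=
  entropy (fun a => ∑ b, P (a, b)) + entropy (fun b => ∑ a, P (a, b)) - entropy P

/-- Kullback–Leibler divergence `D(P ‖ Q) = Σ_{a : P(a) > 0} P(a) ln(P(a)/Q(a))`. -/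
noncomputable def klDiv {A : Type*} [Fintype A] (P Q : A → ℝ) : ℝ :=
  ∑ a ∈ Finset.univ.filter (fun a => 0 < P a), P a * Real.log (P a / Q a)

/-- One-coordinate marginal `P_{X_i}` of a pmf `P` on a finite product. -/
noncomputable def marg {d : ℕ} {X : Fin d → Type*} [∀ i, Fintype (X i)]
    [∀ i, DecidableEq (X i)] (P : (∀ i, X i) → ℝ) (i : Fin d) : X i → ℝ :=
  fun a => ∑ x : ∀ j, X j, if x i = a then P x else 0

/-- Two-coordinate marginal `P_{X_i, X_j}` of a pmf `P` on a finite product. -/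
noncomputable def pairMarg {d : ℕ} {X : Fin d → Type*} [∀ i, Fintype (X i)]
    [∀ i, DecidableEq (X i)] (P : (∀ i, X i) → ℝ) (i j : Fin d) : X i × X j → ℝ :=
  fun p => ∑ x : ∀ j', X j', if x i = p.1 ∧ x j = p.2 then P x else 0

/-- Conditional pmf `P_{X_i | X_j}(a | b) = P_{X_i,X_j}(a,b) / P_{X_j}(b)`. -/
noncomputable def condProb {d : ℕ} {X : Fin d → Type*} [∀ i, Fintype (X i)]
    [∀ i, DecidableEq (X i)] (P : (∀ i, X i) → ℝ) (i j : Fin d) (a : X i) (b : X j) : ℝ :=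
  pairMarg P i j (a, b) / marg P j b

/-- The projection of `P` onto the rooted spanning tree with root `r` and parent map `π`:
`Q_T(x) = P_{X_r}(x_r) · Π_{i ≠ r} P_{X_i | X_{π(i)}}(x_i | x_{π(i)})`. -/
noncomputable def treeProj {d : ℕ} {X : Fin d → Type*} [∀ i, Fintype (X i)]
    [∀ i, DecidableEq (X i)] (P : (∀ i, X i) → ℝ) (r : Fin d) (π : Fin d → Fin d) :
    (∀ i, X i) → ℝ :=
  fun x => marg P r (x r) *
    ∏ i ∈ Finset.univ.filter (fun i => i ≠ r), condProb P i (π i) (x i) (x (π i))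

section Aux

variable {d : ℕ} {X : Fin d → Type*} [∀ i, Fintype (X i)] [∀ i, DecidableEq (X i)]
  [∀ i, Nonempty (X i)]

lemma sum_marg (P : (∀ i, X i) → ℝ) (i : Fin d) :
    ∑ a, marg P i a = ∑ x, P x := by
  unfold marg
  rw [Finset.sum_comm]
  refine Finset.sum_congr rfl fun x _ => ?_
  simp

lemma marg_pos (P : (∀ i, X i) → ℝ) (hPpos : ∀ x, 0 < P x) (i : Fin d) (a : X i) :
    0 < marg P i a := by
  unfold marg
  refine Finset.sum_pos' (fun x _ => by split_ifs; exacts [(hPpos x).le, le_rfl]) ?_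
  refine ⟨Function.update (fun j => Classical.arbitrary (X j)) i a, Finset.mem_univ _, ?_⟩
  rw [Function.update_self, if_pos rfl]
  exact hPpos _

lemma pairMarg_sum_fst (P : (∀ i, X i) → ℝ) (i j : Fin d) (a : X i) :
    ∑ b, pairMarg P i j (a, b) = marg P i a := by
  unfold pairMarg marg
  rw [Finset.sum_comm]
  refine Finset.sum_congr rfl fun x _ => ?_
  by_cases h : x i = a <;> simp [ite_and, h]

lemma pairMarg_sum_snd (P : (∀ i, X i) → ℝ) (i j : Fin d) (b : X j) :
    ∑ a, pairMarg P i j (a, b) = marg P j b := by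
  unfold pairMarg marg
  rw [Finset.sum_comm]
  refine Finset.sum_congr rfl fun x _ => ?_
  by_cases h : x j = b <;> simp [ite_and, h]

lemma pairMarg_pos (P : (∀ i, X i) → ℝ) (hPpos : ∀ x, 0 < P x) {i j : Fin d} (hij : i ≠ j)
    (a : X i) (b : X j) : 0 < pairMarg P i j (a, b) := by
  unfold pairMarg
  refine Finset.sum_pos' (fun x _ => by dsimp only; split_ifs; exacts [(hPpos x).le, le_rfl]) ?_
  refine ⟨Function.update (Function.update (fun k => Classical.arbitrary (X k)) j b) i a,
    Finset.mem_univ _, ?_⟩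
  rw [if_pos ⟨Function.update_self _ _ _, by
    rw [Function.update_of_ne (Ne.symm hij), Function.update_self]⟩]
  exact hPpos _

lemma condProb_pos (P : (∀ i, X i) → ℝ) (hPpos : ∀ x, 0 < P x) {i j : Fin d} (hij : i ≠ j)
    (a : X i) (b : X j) : 0 < condProb P i j a b :=
  div_pos (pairMarg_pos P hPpos hij a b) (marg_pos P hPpos j b)

lemma sum_condProb (P : (∀ i, X i) → ℝ) (hPpos : ∀ x, 0 < P x) (i j : Fin d) (b : X j) :
    ∑ a, condProb P i j a b = 1 := by
  unfold condProb
  rw [← Finset.sum_div, pairMarg_sum_snd, div_self (ne_of_gt (marg_pos P hPpos j b))]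

lemma sum_P_mul_single (P : (∀ i, X i) → ℝ) (i : Fin d) (f : X i → ℝ) :
    ∑ x, P x * f (x i) = ∑ a, marg P i a * f a := by
  unfold marg
  simp only [Finset.sum_mul, ite_mul, zero_mul]
  rw [Finset.sum_comm]
  refine Finset.sum_congr rfl fun x _ => ?_
  simp

lemma sum_P_mul_pair (P : (∀ i, X i) → ℝ) (i j : Fin d) (f : X i → X j → ℝ) :
    ∑ x, P x * f (x i) (x j) = ∑ a, ∑ b, pairMarg P i j (a, b) * f a b := by
  unfold pairMarg
  simp only [Finset.sum_mul, ite_mul, zero_mul]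
  conv_rhs => rw [Finset.sum_congr rfl fun a _ => (Finset.sum_comm :
    (∑ b, ∑ x : ∀ k, X k, if x i = a ∧ x j = b then P x * f a b else 0)
      = ∑ x : ∀ k, X k, ∑ b, if x i = a ∧ x j = b then P x * f a b else 0),
    Finset.sum_comm]
  refine Finset.sum_congr rfl fun x _ => ?_
  simp [ite_and]

/-- Key summing-out step: two factors depending on the `i`-th coordinate with the same
coordinate-wise sums can be exchanged under the total sum. -/
lemma sum_coord_swap (i : Fin d)
    (f g : (∀ j, X j) → X i → ℝ)
    (hf : ∀ x b a, f (Function.update x i b) a = f x a)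
    (hg : ∀ x b a, g (Function.update x i b) a = g x a)
    (hfg : ∀ x, ∑ a, f x a = ∑ a, g x a)
    (G : (∀ j, X j) → ℝ) (hG : ∀ x b, G (Function.update x i b) = G x) :
    ∑ x, f x (x i) * G x = ∑ x, g x (x i) * G x := by
  classical
  set e := Equiv.piSplitAt i X with he
  set a₀ : X i := Classical.arbitrary (X i) with ha₀
  have hsymm : ∀ (a : X i) (y : ∀ j : {j // j ≠ i}, X j),
      e.symm (a, y) = Function.update (e.symm (a₀, y)) i a := by
    intro a y
    funext j
    by_cases h : j = i
    · subst h
      simp [he, Equiv.piSplitAt, Function.update_self]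
    · simp [he, Equiv.piSplitAt, Function.update_of_ne h, h]
  have key : ∀ (F : (∀ j, X j) → X i → ℝ),
      (∀ x b a, F (Function.update x i b) a = F x a) →
      ∑ x, F x (x i) * G x
        = ∑ y : ∀ j : {j // j ≠ i}, X j,
            (∑ a, F (e.symm (a₀, y)) a) * G (e.symm (a₀, y)) := by
    intro F hF
    rw [← Equiv.sum_comp e.symm (fun x => F x (x i) * G x), Fintype.sum_prod_type,
      Finset.sum_comm]
    refine Finset.sum_congr rfl fun y _ => ?_
    rw [Finset.sum_mul]
    refine Finset.sum_congr rfl fun a _ => ?_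
    rw [hsymm a y, Function.update_self, hF, hG]
  rw [key f hf, key g hg]
  refine Finset.sum_congr rfl fun y _ => ?_
  rw [hfg]

end Aux

/-- KL decomposition for tree-structured projections (underlying the Chow–Liu algorithm):
`Q_T` is a pmf and
`D(P ‖ Q_T) = Σ_i H(P_{X_i}) − H(P) − Σ_{i ≠ r} I(P_{X_i, X_{π(i)}})`. -/
theorem klDiv_treeProj_eq {d : ℕ} (hd : 2 ≤ d) {X : Fin d → Type*}
    [∀ i, Fintype (X i)] [∀ i, Nonempty (X i)] [∀ i, DecidableEq (X i)]
    (P : (∀ i, X i) → ℝ) (hP1 : ∑ x, P x = 1) (hPpos : ∀ x, 0 < P x)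
    (r : Fin d) (π : Fin d → Fin d)
    (htree : ∀ i : Fin d, ∃ k : ℕ, π^[k] i = r) :
    (∀ x, 0 ≤ treeProj P r π x) ∧ (∑ x, treeProj P r π x = 1) ∧
    klDiv P (treeProj P r π) =
      (∑ i, entropy (marg P i)) - entropy P -
        ∑ i ∈ Finset.univ.filter (fun i => i ≠ r), mutualInfo (pairMarg P i (π i)) := by
  classical
  set F : Finset (Fin d) := Finset.univ.filter (fun i => i ≠ r) with hF
  have hFr : ∀ i ∈ F, i ≠ r := fun i hi => (Finset.mem_filter.mp hi).2
  have hFmem : ∀ i : Fin d, i ≠ r → i ∈ F := fun i hi =>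
    Finset.mem_filter.mpr ⟨Finset.mem_univ i, hi⟩
  -- the parent of a non-root is distinct from it
  have hπne : ∀ i : Fin d, i ≠ r → π i ≠ i := by
    intro i hi hcontra
    obtain ⟨k, hk⟩ := htree i
    rw [Function.iterate_fixed hcontra k] at hk
    exact hi hk
  -- positivity of the tree projection
  have hQpos : ∀ x, 0 < treeProj P r π x := by
    intro x
    unfold treeProj
    refine mul_pos (marg_pos P hPpos r (x r)) (Finset.prod_pos fun i hi => ?_)
    exact condProb_pos P hPpos (Ne.symm (hπne i (hFr i hi))) _ _
  refine ⟨fun x => (hQpos x).le, ?_, ?_⟩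
  · -- sum to 1
    -- depth of a node: distance to the root
    set depth : Fin d → ℕ := fun i => Nat.find (htree i) with hdepth
    have hdepth_spec : ∀ i, π^[depth i] i = r := fun i => Nat.find_spec (htree i)
    have hdepth_min : ∀ i k, π^[k] i = r → depth i ≤ k := fun i k hk => Nat.find_min' _ hk
    have main : ∀ S : Finset (Fin d), S ⊆ F →
        ∑ x : ∀ j, X j, (marg P r (x r) * ∏ i ∈ S, condProb P i (π i) (x i) (x (π i))) *
          ∏ i ∈ F \ S, marg P i (x i) = 1 := by
      intro S
      induction S using Finset.strongInduction with
      | _ S ih =>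
        intro hS
        rcases S.eq_empty_or_nonempty with rfl | hSne
        · -- base case
          have hrw : ∀ x : ∀ j, X j,
              (marg P r (x r) * ∏ i ∈ (∅ : Finset (Fin d)), condProb P i (π i) (x i) (x (π i))) *
                ∏ i ∈ F \ ∅, marg P i (x i) = ∏ i, marg P i (x i) := by
            intro x
            rw [Finset.prod_empty, mul_one, Finset.sdiff_empty, hF, Finset.filter_ne']
            exact Finset.mul_prod_erase Finset.univ (fun k => marg P k (x k))
              (Finset.mem_univ r)
          rw [Finset.sum_congr rfl fun x _ => hrw x, ← Fintype.prod_sum]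
          simp [sum_marg, hP1]
        · -- inductive step: pick an element of maximal depth
          obtain ⟨i, hiS, hmax⟩ := Finset.exists_max_image S depth hSne
          have hir : i ≠ r := hFr i (hS hiS)
          have hiF : i ∈ F := hS hiS
          have hπii : π i ≠ i := hπne i hir
          have hleaf : ∀ j ∈ S, π j ≠ i := by
            intro j hjS hji
            have hjr : j ≠ r := hFr j (hS hjS)
            have hk := hdepth_spec j
            have hk0 : depth j ≠ 0 := by
              intro h0
              rw [h0] at hk
              exact hjr hk
            obtain ⟨k', hk'⟩ := Nat.exists_eq_succ_of_ne_zero hk0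
            rw [hk', Function.iterate_succ_apply, hji] at hk
            have := hdepth_min i k' hk
            have := hmax j hjS
            omega
          -- rewrite the summand to apply sum_coord_swap at coordinate i
          set G : (∀ j, X j) → ℝ := fun x =>
            (marg P r (x r) * ∏ j ∈ S.erase i, condProb P j (π j) (x j) (x (π j))) *
              ∏ j ∈ F \ S, marg P j (x j) with hG
          have hGinv : ∀ (x : ∀ j, X j) (b : X i), G (Function.update x i b) = G x := by
            intro x b
            rw [hG]
            simp only
            congr 1
            · congr 1
              · rw [Function.update_of_ne (Ne.symm hir)]
              · refine Finset.prod_congr rfl fun j hj => ?_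
                have hji : j ≠ i := Finset.ne_of_mem_erase hj
                rw [Function.update_of_ne hji,
                  Function.update_of_ne (hleaf j (Finset.mem_of_mem_erase hj))]
            · refine Finset.prod_congr rfl fun j hj => ?_
              have hji : j ≠ i := by
                intro h; subst h
                exact (Finset.mem_sdiff.mp hj).2 hiS
              rw [Function.update_of_ne hji]
          have step1 : ∀ x : ∀ j, X j,
              (marg P r (x r) * ∏ j ∈ S, condProb P j (π j) (x j) (x (π j))) *
                ∏ j ∈ F \ S, marg P j (x j)
              = condProb P i (π i) (x i) (x (π i)) * G x := by
            intro x
            rw [← Finset.mul_prod_erase S _ hiS, hG]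
            ring
          have step2 : ∑ x, condProb P i (π i) (x i) (x (π i)) * G x
              = ∑ x, marg P i (x i) * G x := by
            refine sum_coord_swap i (fun x a => condProb P i (π i) a (x (π i)))
              (fun _ a => marg P i a) ?_ ?_ ?_ G hGinv
            · intro x b a
              rw [Function.update_of_ne hπii]
            · intro _ _ _; rfl
            · intro x
              rw [sum_condProb P hPpos i (π i) (x (π i)), sum_marg, hP1]
          have step3 : ∀ x : ∀ j, X j, marg P i (x i) * G x
              = (marg P r (x r) * ∏ j ∈ S.erase i, condProb P j (π j) (x j) (x (π j))) *
                ∏ j ∈ F \ S.erase i, marg P j (x j) := by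
            intro x
            rw [Finset.sdiff_erase hiF, Finset.prod_insert (by
              simp [Finset.mem_sdiff, hiS]), hG]
            ring
          rw [Finset.sum_congr rfl fun x _ => step1 x, step2,
            Finset.sum_congr rfl fun x _ => step3 x]
          exact ih (S.erase i) (Finset.erase_ssubset hiS)
            ((Finset.erase_subset i S).trans hS)
    have := main F (le_refl F)
    simpa [treeProj] using this
  · -- the KL identity
    have hfilter : Finset.univ.filter (fun x => 0 < P x) = (Finset.univ : Finset (∀ i, X i)) :=
      Finset.filter_true_of_mem fun x _ => hPpos x
    have hlogQ : ∀ x : ∀ j, X j, Real.log (treeProj P r π x)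
        = Real.log (marg P r (x r)) +
          ∑ i ∈ F, (Real.log (pairMarg P i (π i) (x i, x (π i)))
            - Real.log (marg P (π i) (x (π i)))) := by
      intro x
      unfold treeProj
      rw [Real.log_mul (ne_of_gt (marg_pos P hPpos r (x r)))
        (ne_of_gt (Finset.prod_pos fun i hi =>
          condProb_pos P hPpos (Ne.symm (hπne i (hFr i hi))) _ _)),
        Real.log_prod (fun i hi =>
          ne_of_gt (condProb_pos P hPpos (Ne.symm (hπne i (hFr i hi))) _ _))]
      congr 1
      refine Finset.sum_congr rfl fun i hi => ?_
      unfold condProb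
      rw [Real.log_div
        (ne_of_gt (pairMarg_pos P hPpos (Ne.symm (hπne i (hFr i hi))) _ _))
        (ne_of_gt (marg_pos P hPpos (π i) (x (π i))))]
    have hkl : klDiv P (treeProj P r π)
        = (∑ x, P x * Real.log (P x))
          - ((∑ x, P x * Real.log (marg P r (x r)))
            + ∑ i ∈ F, ((∑ x, P x * Real.log (pairMarg P i (π i) (x i, x (π i))))
              - ∑ x, P x * Real.log (marg P (π i) (x (π i))))) := by
      unfold klDiv
      rw [hfilter]
      have expand : ∀ x : ∀ j, X j, P x * Real.log (P x / treeProj P r π x)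
          = P x * Real.log (P x) - (P x * Real.log (marg P r (x r))
            + ∑ i ∈ F, (P x * Real.log (pairMarg P i (π i) (x i, x (π i)))
              - P x * Real.log (marg P (π i) (x (π i))))) := by
        intro x
        rw [Real.log_div (ne_of_gt (hPpos x)) (ne_of_gt (hQpos x)), hlogQ x,
          mul_sub, mul_add, Finset.mul_sum]
        congr 2
        exact Finset.sum_congr rfl fun i _ => mul_sub _ _ _
      rw [Finset.sum_congr rfl fun x _ => expand x, Finset.sum_sub_distrib,
        Finset.sum_add_distrib, Finset.sum_comm]
      congr 2
      exact Finset.sum_congr rfl fun i _ => Finset.sum_sub_distrib _ _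
    -- convert each term to entropies
    have hsingle : ∀ i : Fin d, ∑ x, P x * Real.log (marg P i (x i))
        = -entropy (marg P i) := by
      intro i
      rw [sum_P_mul_single P i (fun a => Real.log (marg P i a))]
      unfold entropy
      simp only [Finset.sum_neg_distrib, neg_neg]
    have hpair : ∀ i : Fin d, ∑ x, P x * Real.log (pairMarg P i (π i) (x i, x (π i)))
        = -entropy (pairMarg P i (π i)) := by
      intro i
      rw [sum_P_mul_pair P i (π i) (fun a b => Real.log (pairMarg P i (π i) (a, b)))]
      unfold entropy
      rw [Fintype.sum_prod_type]
      simp only [Finset.sum_neg_distrib, neg_neg]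
    have hPterm : ∑ x, P x * Real.log (P x) = -entropy P := by
      unfold entropy
      simp only [Finset.sum_neg_distrib, neg_neg]
    have hmi : ∀ i ∈ F, mutualInfo (pairMarg P i (π i))
        = entropy (marg P i) + entropy (marg P (π i)) - entropy (pairMarg P i (π i)) := by
      intro i _
      unfold mutualInfo
      congr 2
      · exact congrArg entropy (funext fun a => pairMarg_sum_fst P i (π i) a)
      · exact congrArg entropy (funext fun b => pairMarg_sum_snd P i (π i) b)
    rw [hkl, hPterm, hsingle r,
      Finset.sum_congr rfl fun i hi => by rw [hpair i, hsingle (π i)],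
      Finset.sum_congr rfl hmi]
    have hsplit : ∑ i, entropy (marg P i)
        = entropy (marg P r) + ∑ i ∈ F, entropy (marg P i) := by
      rw [hF, Finset.filter_ne']
      exact (Finset.add_sum_erase Finset.univ (fun i => entropy (marg P i))
        (Finset.mem_univ r)).symm
    rw [hsplit, Finset.sum_sub_distrib, Finset.sum_sub_distrib, Finset.sum_add_distrib]
    simp only [Finset.sum_neg_distrib]
    ring
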